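/- Let ρ be a positive definite density matrix (positive semidefinite with trace 1 and full rank) on a finite-dimensional Hilbert space, τ ∈ [0,1], and A, A' linear operators. Define cov_ρ^τ(A,A') := Tr(ρ^τ A ρ^{1-τ} A') - Tr(ρ A) Tr(ρ A'). Then |cov_ρ^τ(A,A')| ≤ ‖A‖_∞ ‖A'‖_∞, where ‖·‖_∞ denotes the operator norm. -/

import Mathlib

open scoped ComplexOrder

variable {n : Type*} [Fintype n] [DecidableEq n]

/-- `ρ^t` for a Hermitian matrix `ρ`, defined via the spectral decomposition. -/
noncomputable def mpow {ρ : Matrix n n ℂ} (hρ : ρ.IsHermitian) (t : ℝ) : Matrix n n ℂ :=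
  (hρ.eigenvectorUnitary : Matrix n n ℂ) *
    Matrix.diagonal (fun i => ((hρ.eigenvalues i ^ t : ℝ) : ℂ)) *
    star (hρ.eigenvectorUnitary : Matrix n n ℂ)

/-- The operator norm `‖·‖_∞` of a matrix, acting on the Euclidean space. -/
noncomputable def opNorm (A : Matrix n n ℂ) : ℝ :=
  ‖Matrix.toEuclideanCLM (𝕜 := ℂ) A‖

/-- The generalized covariance
`cov_ρ^τ(A,A') = Tr(ρ^τ A ρ^{1−τ} A') − Tr(ρ A) Tr(ρ A')`. -/
noncomputable def gCov {ρ : Matrix n n ℂ} (hρ : ρ.IsHermitian) (τ : ℝ)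
    (A A' : Matrix n n ℂ) : ℂ :=
  (mpow hρ τ * A * mpow hρ (1 - τ) * A').trace - (ρ * A).trace * (ρ * A').trace

section Aux
open Matrix Finset
open scoped Matrix.Norms.L2Operator
set_option linter.unusedSectionVars false




lemma opNorm_eq (A : Matrix n n ℂ) : opNorm A = ‖A‖ := rfl

lemma opNorm_conjTranspose (A : Matrix n n ℂ) : opNorm Aᴴ = opNorm A := by
  rw [opNorm_eq, opNorm_eq, Matrix.l2_opNorm_conjTranspose]

lemma euclid_norm_sq (v : n → ℂ) :
    ‖(EuclideanSpace.equiv n ℂ).symm v‖ ^ 2 = ∑ j, Complex.normSq (v j) := by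
  rw [EuclideanSpace.norm_eq, Real.sq_sqrt (by positivity)]
  simp [Complex.sq_norm]

lemma mulVec_normSq_le (M : Matrix n n ℂ) (v : n → ℂ) :
    ∑ j, Complex.normSq ((M *ᵥ v) j) ≤ opNorm M ^ 2 * ∑ j, Complex.normSq (v j) := by
  have h := Matrix.l2_opNorm_mulVec M ((EuclideanSpace.equiv n ℂ).symm v)
  calc ∑ j, Complex.normSq ((M *ᵥ v) j)
      = ‖(EuclideanSpace.equiv n ℂ).symm (M *ᵥ v)‖ ^ 2 := (euclid_norm_sq _).symm
    _ ≤ (‖M‖ * ‖(EuclideanSpace.equiv n ℂ).symm v‖) ^ 2 := by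
        apply pow_le_pow_left₀ (norm_nonneg _) h
    _ = opNorm M ^ 2 * ∑ j, Complex.normSq (v j) := by
        rw [mul_pow, euclid_norm_sq, opNorm_eq]

lemma star_dot (w : n → ℂ) : star w ⬝ᵥ w = ((∑ j, Complex.normSq (w j) : ℝ) : ℂ) := by
  push_cast
  simp [dotProduct, Complex.normSq_eq_conj_mul_self]

lemma unitary_mulVec_normSq {U : Matrix n n ℂ} (hU : Uᴴ * U = 1) (v : n → ℂ) :
    ∑ j, Complex.normSq ((U *ᵥ v) j) = ∑ j, Complex.normSq (v j) := by
  have key : star (U *ᵥ v) ⬝ᵥ (U *ᵥ v) = star v ⬝ᵥ v := by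
    rw [star_mulVec, dotProduct_mulVec, vecMul_vecMul, hU, vecMul_one]
  rw [star_dot, star_dot] at key
  exact_mod_cast key

lemma single_normSq (i : n) : ∑ j, Complex.normSq ((Pi.single i 1 : n → ℂ) j) = 1 := by
  simp only [Pi.single_apply]
  rw [Finset.sum_congr rfl (fun j _ => by
    by_cases h : j = i <;> simp [h] : ∀ j ∈ Finset.univ,
      Complex.normSq (if j = i then (1:ℂ) else 0) = if j = i then 1 else 0)]
  simp

lemma mulVec_single_eq (M : Matrix n n ℂ) (i j : n) : (M *ᵥ Pi.single i 1) j = M j i := by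
  simp [Matrix.mulVec_single]

lemma rowcol (U : Matrix n n ℂ) (hU : star U * U = 1) (hU' : U * star U = 1)
    (A : Matrix n n ℂ) :
    (∀ i, ∑ j, Complex.normSq ((star U * A * U) i j) ≤ opNorm A ^ 2) ∧
    (∀ j, ∑ i, Complex.normSq ((star U * A * U) i j) ≤ opNorm A ^ 2) := by
  rw [Matrix.star_eq_conjTranspose] at hU hU'
  have hUu : Uᴴᴴ * Uᴴ = 1 := by rwa [conjTranspose_conjTranspose]
  constructor
  · intro i
    have hBH : (Uᴴ * A * U)ᴴ = Uᴴ * Aᴴ * U := by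
      simp [conjTranspose_mul, Matrix.mul_assoc]
    calc ∑ j, Complex.normSq ((Uᴴ * A * U) i j)
        = ∑ j, Complex.normSq (((Uᴴ * A * U)ᴴ *ᵥ Pi.single i 1) j) := by
          refine Finset.sum_congr rfl fun j _ => ?_
          rw [mulVec_single_eq, conjTranspose_apply]
          simp [Complex.star_def, Complex.normSq_conj]
      _ = ∑ j, Complex.normSq ((Uᴴ *ᵥ (Aᴴ *ᵥ (U *ᵥ Pi.single i 1))) j) := by
          rw [hBH, show Uᴴ *ᵥ (Aᴴ *ᵥ (U *ᵥ (Pi.single i 1 : n → ℂ)))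
            = (Uᴴ * Aᴴ * U) *ᵥ (Pi.single i 1 : n → ℂ) by
              rw [Matrix.mulVec_mulVec, Matrix.mulVec_mulVec]]
      _ = ∑ j, Complex.normSq ((Aᴴ *ᵥ (U *ᵥ Pi.single i 1)) j) :=
          unitary_mulVec_normSq hUu _
      _ ≤ opNorm Aᴴ ^ 2 * ∑ j, Complex.normSq ((U *ᵥ Pi.single i 1) j) :=
          mulVec_normSq_le _ _
      _ = opNorm A ^ 2 := by
          rw [unitary_mulVec_normSq hU, single_normSq, mul_one, opNorm_conjTranspose]
  · intro j
    calc ∑ i, Complex.normSq ((Uᴴ * A * U) i j)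
        = ∑ i, Complex.normSq (((Uᴴ * A * U) *ᵥ Pi.single j 1) i) := by
          refine Finset.sum_congr rfl fun i _ => ?_
          rw [mulVec_single_eq]
      _ = ∑ i, Complex.normSq ((Uᴴ *ᵥ (A *ᵥ (U *ᵥ Pi.single j 1))) i) := by
          rw [show Uᴴ *ᵥ (A *ᵥ (U *ᵥ (Pi.single j 1 : n → ℂ)))
            = (Uᴴ * A * U) *ᵥ (Pi.single j 1 : n → ℂ) by
              rw [Matrix.mulVec_mulVec, Matrix.mulVec_mulVec]]
      _ = ∑ i, Complex.normSq ((A *ᵥ (U *ᵥ Pi.single j 1)) i) :=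
          unitary_mulVec_normSq hUu _
      _ ≤ opNorm A ^ 2 * ∑ i, Complex.normSq ((U *ᵥ Pi.single j 1) i) :=
          mulVec_normSq_le _ _
      _ = opNorm A ^ 2 := by
          rw [unitary_mulVec_normSq hU, single_normSq, mul_one]
lemma trace_dm (a : n → ℂ) (M : Matrix n n ℂ) :
    (Matrix.diagonal a * M).trace = ∑ i, a i * M i i := by
  simp [Matrix.trace, Matrix.diag, Matrix.diagonal_mul]

lemma trace_dmd (a b : n → ℂ) (M N : Matrix n n ℂ) :
    (Matrix.diagonal a * M * Matrix.diagonal b * N).trace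
      = ∑ i, ∑ j, a i * M i j * b j * N j i := by
  simp only [Matrix.trace, Matrix.diag]
  refine Finset.sum_congr rfl fun i _ => ?_
  rw [Matrix.mul_apply]
  refine Finset.sum_congr rfl fun j _ => ?_
  rw [Matrix.mul_diagonal, Matrix.diagonal_mul]

lemma trace_conj2 (U D X : Matrix n n ℂ) :
    (U * D * star U * X).trace = (D * (star U * X * U)).trace := by
  rw [show U * D * star U * X = U * (D * (star U * X)) by simp only [Matrix.mul_assoc],
    Matrix.trace_mul_comm]
  simp only [Matrix.mul_assoc]

lemma trace_conj4 (U D1 D2 X Y : Matrix n n ℂ) :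
    (U * D1 * star U * X * (U * D2 * star U) * Y).trace
      = (D1 * (star U * X * U) * D2 * (star U * Y * U)).trace := by
  rw [show U * D1 * star U * X * (U * D2 * star U) * Y
      = U * (D1 * (star U * (X * (U * (D2 * (star U * Y)))))) by simp only [Matrix.mul_assoc],
    Matrix.trace_mul_comm]
  simp only [Matrix.mul_assoc]
lemma wrb (d : n → ℝ) (hd : ∀ i, 0 ≤ d i) (hd1 : ∑ i, d i = 1)
    (f : n → n → ℂ) (c : ℂ) (hc : ∑ i, (d i : ℂ) * f i i = c)
    (K : ℝ) (hrow : ∀ i, ∑ j, Complex.normSq (f i j) ≤ K) :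
    ∑ i, ∑ j, d i * Complex.normSq (f i j - c * (if i = j then 1 else 0)) ≤ K := by
  have expand : ∀ i, ∑ j, Complex.normSq (f i j - c * (if i = j then 1 else 0))
      = (∑ j, Complex.normSq (f i j)) - 2 * (f i i * (starRingEnd ℂ) c).re
        + Complex.normSq c := by
    intro i
    have e : ∀ j, Complex.normSq (f i j - c * (if i = j then 1 else 0))
        = Complex.normSq (f i j)
          - 2 * ((if i = j then (f i j * (starRingEnd ℂ) c).re else 0))
          + (if i = j then Complex.normSq c else 0) := by
      intro j
      by_cases h : i = j <;> simp [h, Complex.normSq_sub] <;> ring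
    simp only [e, Finset.sum_add_distrib, Finset.sum_sub_distrib]
    rw [show (∑ x, 2 * if i = x then (f i x * (starRingEnd ℂ) c).re else 0)
        = 2 * ∑ x, if i = x then (f i x * (starRingEnd ℂ) c).re else 0 from
        (Finset.mul_sum _ _ _).symm]
    simp [Finset.sum_ite_eq]
  have hre : ∑ i, d i * (f i i * (starRingEnd ℂ) c).re = Complex.normSq c := by
    have h1 : ∑ i, d i * (f i i * (starRingEnd ℂ) c).re
        = (∑ i, ((d i : ℂ) * f i i) * (starRingEnd ℂ) c).re := by
      rw [Complex.re_sum]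
      exact Finset.sum_congr rfl fun i _ => by
        rw [mul_assoc, Complex.re_ofReal_mul]
    rw [h1, ← Finset.sum_mul, hc, Complex.mul_conj]
    simp
  have h1 : (∑ i, d i * ∑ j, Complex.normSq (f i j)) ≤ K := by
    calc (∑ i, d i * ∑ j, Complex.normSq (f i j)) ≤ ∑ i, d i * K :=
          Finset.sum_le_sum fun i _ => mul_le_mul_of_nonneg_left (hrow i) (hd i)
      _ = K := by rw [← Finset.sum_mul, hd1, one_mul]
  calc ∑ i, ∑ j, d i * Complex.normSq (f i j - c * (if i = j then 1 else 0))
      = ∑ i, d i * ((∑ j, Complex.normSq (f i j)) - 2 * (f i i * (starRingEnd ℂ) c).re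
          + Complex.normSq c) := by
        refine Finset.sum_congr rfl fun i _ => ?_
        rw [← Finset.mul_sum, expand i]
    _ = (∑ i, d i * ∑ j, Complex.normSq (f i j))
          - 2 * (∑ i, d i * (f i i * (starRingEnd ℂ) c).re)
          + Complex.normSq c * ∑ i, d i := by
        simp only [mul_sub, mul_add, Finset.sum_add_distrib, Finset.sum_sub_distrib]
        congr 1
        · congr 1
          rw [Finset.mul_sum]
          exact Finset.sum_congr rfl fun i _ => by ring
        · rw [Finset.mul_sum]
          exact Finset.sum_congr rfl fun i _ => by ring
    _ ≤ K := by
        rw [hre, hd1, mul_one]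
        have := Complex.normSq_nonneg c
        linarith
lemma sum_w_bound (d : n → ℝ) (hd : ∀ i, 0 < d i) (hd1 : ∑ i, d i = 1)
    (s t : ℝ) (hs : 0 ≤ s) (ht : 0 ≤ t) (hst : s + t = 1)
    (g : n → n → ℂ) (c : ℂ) (hc : ∑ i, (d i : ℂ) * g i i = c) (K : ℝ)
    (hrow : ∀ i, ∑ j, Complex.normSq (g i j) ≤ K)
    (hcol : ∀ j, ∑ i, Complex.normSq (g i j) ≤ K) :
    ∑ i, ∑ j, (d i ^ s * d j ^ t) *
      Complex.normSq (g i j - c * (if i = j then 1 else 0)) ≤ K := by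
  set q : n → n → ℝ := fun i j => Complex.normSq (g i j - c * (if i = j then 1 else 0)) with hq
  have hA : ∑ i, ∑ j, d i * q i j ≤ K := wrb d (fun i => (hd i).le) hd1 g c hc K hrow
  have hB : ∑ i, ∑ j, d j * q i j ≤ K := by
    rw [Finset.sum_comm]
    have h2 := wrb d (fun i => (hd i).le) hd1 (fun i j => g j i) c (by simpa using hc) K
      (fun i => hcol i)
    have hq2 : ∀ i j, q j i = Complex.normSq (g j i - c * (if i = j then 1 else 0)) := by
      intro i j
      by_cases h : i = j
      · subst h; rfl
      · simp [hq, h, Ne.symm h]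
    calc ∑ j, ∑ i, d j * q i j = ∑ i, ∑ j, d i * q j i := rfl
      _ ≤ K := by simpa only [hq2] using h2
  have amgm : ∀ i j, d i ^ s * d j ^ t ≤ s * d i + t * d j := fun i j =>
    Real.geom_mean_le_arith_mean2_weighted hs ht (hd i).le (hd j).le hst
  calc ∑ i, ∑ j, (d i ^ s * d j ^ t) * q i j
      ≤ ∑ i, ∑ j, (s * d i + t * d j) * q i j :=
        Finset.sum_le_sum fun i _ => Finset.sum_le_sum fun j _ =>
          mul_le_mul_of_nonneg_right (amgm i j) (Complex.normSq_nonneg _)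
    _ = s * (∑ i, ∑ j, d i * q i j) + t * (∑ i, ∑ j, d j * q i j) := by
        have e : ∀ i j, (s * d i + t * d j) * q i j
            = s * (d i * q i j) + t * (d j * q i j) := fun i j => by ring
        simp only [e, Finset.sum_add_distrib, ← Finset.mul_sum]
    _ ≤ s * K + t * K :=
        add_le_add (mul_le_mul_of_nonneg_left hA hs) (mul_le_mul_of_nonneg_left hB ht)
    _ = K := by rw [← add_mul, hst, one_mul]


lemma gCov_eq (ρ : Matrix n n ℂ) (hH : ρ.IsHermitian) (τ : ℝ) (A A' : Matrix n n ℂ) :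
    gCov hH τ A A' = (∑ i, ∑ j, ((hH.eigenvalues i ^ τ : ℝ) : ℂ)
        * ((star (hH.eigenvectorUnitary : Matrix n n ℂ) * A
            * (hH.eigenvectorUnitary : Matrix n n ℂ)) i j)
        * ((hH.eigenvalues j ^ (1 - τ) : ℝ) : ℂ)
        * ((star (hH.eigenvectorUnitary : Matrix n n ℂ) * A'
            * (hH.eigenvectorUnitary : Matrix n n ℂ)) j i))
      - (ρ * A).trace * (ρ * A').trace := by
  unfold gCov mpow
  rw [trace_conj4, trace_dmd]

end Aux

open Matrix Finset

/-- For a positive definite density matrix `ρ` and `τ ∈ [0,1]`,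
`|cov_ρ^τ(A,A')| ≤ ‖A‖_∞ ‖A'‖_∞`. -/
theorem stmt4 (ρ : Matrix n n ℂ) (hρ : ρ.PosDef) (htr : ρ.trace = 1)
    (τ : ℝ) (hτ : τ ∈ Set.Icc (0 : ℝ) 1) (A A' : Matrix n n ℂ) :
    ‖gCov hρ.1 τ A A'‖ ≤ opNorm A * opNorm A' := by
  obtain ⟨hτ0, hτ1⟩ := hτ
  have kk := gCov_eq ρ hρ.1 τ A A'
  have hspec := hρ.1.spectral_theorem
  set U : Matrix n n ℂ := (hρ.1.eigenvectorUnitary : Matrix n n ℂ) with hUdef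
  set d : n → ℝ := hρ.1.eigenvalues with hddef
  have hUU : star U * U = 1 := Matrix.mem_unitaryGroup_iff'.mp (hρ.1.eigenvectorUnitary).2
  have hUU' : U * star U = 1 := Matrix.mem_unitaryGroup_iff.mp (hρ.1.eigenvectorUnitary).2
  have hspec' : ρ = U * Matrix.diagonal (fun i => (d i : ℂ)) * star U := hspec
  have hd : ∀ i, 0 < d i := fun i => hρ.eigenvalues_pos i
  have hd1 : ∑ i, d i = 1 := by
    have h1 : (∑ i, ((d i : ℂ))) = 1 := by
      calc (∑ i, ((d i : ℂ))) = (Matrix.diagonal (fun i => (d i : ℂ))).trace :=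
            (Matrix.trace_diagonal _).symm
        _ = ρ.trace := by
            conv_rhs => rw [hspec', Matrix.trace_mul_cycle, hUU, Matrix.one_mul]
        _ = 1 := htr
    exact_mod_cast h1
  have hsum1 : (∑ i, ((d i : ℂ))) = 1 := by exact_mod_cast hd1
  set B : Matrix n n ℂ := star U * A * U with hB
  set B' : Matrix n n ℂ := star U * A' * U with hB'
  have hcB : ∑ i, (d i : ℂ) * B i i = (ρ * A).trace := by
    conv_rhs => rw [hspec', trace_conj2, trace_dm]
  have hcB' : ∑ i, (d i : ℂ) * B' i i = (ρ * A').trace := by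
    conv_rhs => rw [hspec', trace_conj2, trace_dm]
  set c : ℂ := (ρ * A).trace with hcdef
  set c' : ℂ := (ρ * A').trace with hcdef'
  -- centered matrices (as entry functions)
  have key1 : gCov hρ.1 τ A A' = ∑ i, ∑ j, ((d i ^ τ * d j ^ (1 - τ) : ℝ) : ℂ) *
      ((B i j - c * (if i = j then 1 else 0)) * (B' j i - c' * (if j = i then 1 else 0))) := by
    have e : ∀ i j, ((d i ^ τ * d j ^ (1 - τ) : ℝ) : ℂ) *
        ((B i j - c * (if i = j then 1 else 0)) * (B' j i - c' * (if j = i then 1 else 0)))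
        = ((d i ^ τ : ℝ) : ℂ) * B i j * ((d j ^ (1 - τ) : ℝ) : ℂ) * B' j i
          - (if i = j then (d i : ℂ) * (c' * B i i) + (d i : ℂ) * (c * B' i i)
              - (d i : ℂ) * (c * c') else 0) := by
      intro i j
      by_cases h : i = j
      · subst h
        have hw : d i ^ τ * d i ^ (1 - τ) = d i := by
          rw [← Real.rpow_add (hd i)]; norm_num
        have hwC : ((d i ^ τ : ℝ) : ℂ) * ((d i ^ (1 - τ) : ℝ) : ℂ) = (d i : ℂ) := by
          rw [← Complex.ofReal_mul, hw]
        simp only [eq_self_iff_true, if_true, mul_one]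
        rw [Complex.ofReal_mul]
        linear_combination ((B i i - c) * (B' i i - c') - B i i * B' i i) * hwC
      · have h' : ¬ (j = i) := fun hh => h hh.symm
        simp only [if_neg h, if_neg h', mul_zero, sub_zero]
        push_cast
        ring
    rw [kk]
    rw [Finset.sum_congr rfl fun i _ => Finset.sum_congr rfl fun j _ => e i j]
    simp only [Finset.sum_sub_distrib]
    congr 1
    have e3 : ∑ i, ((d i : ℂ) * (c' * B i i) + (d i : ℂ) * (c * B' i i)
        - (d i : ℂ) * (c * c')) = c * c' := by
      have e1 : ∀ i, (d i : ℂ) * (c' * B i i) = c' * ((d i : ℂ) * B i i) := fun i => by ring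
      have e2 : ∀ i, (d i : ℂ) * (c * B' i i) = c * ((d i : ℂ) * B' i i) := fun i => by ring
      have e4 : ∀ i, (d i : ℂ) * (c * c') = (c * c') * (d i : ℂ) := fun i => by ring
      simp only [e1, e2, e4, Finset.sum_add_distrib, Finset.sum_sub_distrib,
        ← Finset.mul_sum, hcB, hcB', hsum1]
      ring
    have e5 : ∑ i, ∑ j, (if i = j then (d i : ℂ) * (c' * B i i) + (d i : ℂ) * (c * B' i i)
        - (d i : ℂ) * (c * c') else 0)
        = ∑ i, ((d i : ℂ) * (c' * B i i) + (d i : ℂ) * (c * B' i i) - (d i : ℂ) * (c * c')) := by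
      simp only [Finset.sum_ite_eq, Finset.mem_univ, if_true]
    rw [e5]
    exact e3.symm
  -- now the estimate
  have hrcA := rowcol U hUU hUU' A
  have hrcA' := rowcol U hUU hUU' A'
  set a : ℝ := opNorm A with hadef
  set b : ℝ := opNorm A' with hbdef
  have ha0 : 0 ≤ a := norm_nonneg _
  have hb0 : 0 ≤ b := norm_nonneg _
  set F : n × n → ℝ := fun p => Real.sqrt (d p.1 ^ τ * d p.2 ^ (1 - τ)) *
    ‖B p.1 p.2 - c * (if p.1 = p.2 then 1 else 0)‖ with hF
  set G : n × n → ℝ := fun p => Real.sqrt (d p.1 ^ τ * d p.2 ^ (1 - τ)) *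
    ‖B' p.2 p.1 - c' * (if p.2 = p.1 then 1 else 0)‖ with hG
  have hw0 : ∀ (i j : n), 0 ≤ d i ^ τ * d j ^ (1 - τ) := fun i j =>
    mul_nonneg (Real.rpow_nonneg (hd i).le _) (Real.rpow_nonneg (hd j).le _)
  have habs : ‖gCov hρ.1 τ A A'‖ ≤ ∑ p ∈ univ ×ˢ univ, F p * G p := by
    rw [key1, ← Finset.sum_product']
    refine le_trans (norm_sum_le _ _) (le_of_eq (Finset.sum_congr rfl fun p _ => ?_))
    rw [norm_mul, norm_mul, Complex.norm_real, Real.norm_of_nonneg (hw0 _ _), hF, hG]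
    have : d p.1 ^ τ * d p.2 ^ (1 - τ)
        = Real.sqrt (d p.1 ^ τ * d p.2 ^ (1 - τ)) * Real.sqrt (d p.1 ^ τ * d p.2 ^ (1 - τ)) :=
      (Real.mul_self_sqrt (hw0 _ _)).symm
    rw [this]; ring
  have hFsq : ∑ p ∈ univ ×ˢ univ, F p ^ 2 ≤ a ^ 2 := by
    rw [Finset.sum_product]
    have : ∀ (i j : n), F (i, j) ^ 2 = (d i ^ τ * d j ^ (1 - τ)) *
        Complex.normSq (B i j - c * (if i = j then 1 else 0)) := by
      intro i j
      rw [hF, mul_pow, Real.sq_sqrt (hw0 _ _), Complex.sq_norm]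
    simp only [this]
    exact sum_w_bound d hd hd1 τ (1 - τ) hτ0 (by linarith) (by ring)
      (fun i j => B i j) c hcB (a ^ 2) hrcA.1 hrcA.2
  have hGsq : ∑ p ∈ univ ×ˢ univ, G p ^ 2 ≤ b ^ 2 := by
    rw [Finset.sum_product]
    have e1 : ∀ (i j : n), G (i, j) ^ 2 = (d i ^ τ * d j ^ (1 - τ)) *
        Complex.normSq (B' j i - c' * (if j = i then 1 else 0)) := by
      intro i j
      rw [hG, mul_pow, Real.sq_sqrt (hw0 _ _), Complex.sq_norm]
    simp only [e1]
    rw [Finset.sum_comm]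
    have e2 : ∀ (j i : n), (d i ^ τ * d j ^ (1 - τ)) *
        Complex.normSq (B' j i - c' * (if j = i then 1 else 0))
        = (d j ^ (1 - τ) * d i ^ τ) *
          Complex.normSq (B' j i - c' * (if j = i then 1 else 0)) := fun j i => by ring
    calc ∑ j, ∑ i, (d i ^ τ * d j ^ (1 - τ)) *
          Complex.normSq (B' j i - c' * (if j = i then 1 else 0))
        = ∑ i, ∑ j, (d i ^ (1 - τ) * d j ^ τ) *
          Complex.normSq (B' i j - c' * (if i = j then 1 else 0)) := by
          refine Finset.sum_congr rfl fun j _ => Finset.sum_congr rfl fun i _ => e2 j i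
      _ ≤ b ^ 2 := sum_w_bound d hd hd1 (1 - τ) τ (by linarith) hτ0 (by ring)
          (fun i j => B' i j) c' hcB' (b ^ 2) hrcA'.1 hrcA'.2
  have hT0 : 0 ≤ ∑ p ∈ univ ×ˢ univ, F p * G p :=
    Finset.sum_nonneg fun p _ => mul_nonneg
      (mul_nonneg (Real.sqrt_nonneg _) (norm_nonneg _))
      (mul_nonneg (Real.sqrt_nonneg _) (norm_nonneg _))
  have hCS := Finset.sum_mul_sq_le_sq_mul_sq (univ ×ˢ univ) F G
  have hfin : (∑ p ∈ univ ×ˢ univ, F p * G p) ^ 2 ≤ (a * b) ^ 2 := by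
    calc (∑ p ∈ univ ×ˢ univ, F p * G p) ^ 2
        ≤ (∑ p ∈ univ ×ˢ univ, F p ^ 2) * (∑ p ∈ univ ×ˢ univ, G p ^ 2) := hCS
      _ ≤ a ^ 2 * b ^ 2 := mul_le_mul hFsq hGsq
          (Finset.sum_nonneg fun p _ => sq_nonneg _) (sq_nonneg _)
      _ = (a * b) ^ 2 := by ring
  have := le_of_pow_le_pow_left₀ two_ne_zero (mul_nonneg ha0 hb0)
    (le_trans (pow_le_pow_left₀ hT0 le_rfl 2) hfin)
  calc ‖gCov hρ.1 τ A A'‖ ≤ ∑ p ∈ univ ×ˢ univ, F p * G p := habs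
    _ ≤ a * b := this
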